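/- arXiv:2507.16765 — 5 statements merged into one kernel-verified Lean document; each statement's English description precedes it below -/
import Mathlib

section
/- The formal power series u(x) = (1 + 3x - sqrt(1 + 6x + 9x^2 - 4x^3 - 8x^4))/(2x^2) is the compositional inverse of the power series 2x/(1 - 3x + sqrt(1 + 2x + 9x^2 + 4x^3)); that is, substituting one into the other yields x. -/
open PowerSeries

/-- The formal power series `u(x) = (1 + 3x - sqrt(1 + 6x + 9x² - 4x³ - 8x⁴))/(2x²)` is the
compositional inverse of `F(x) = 2x/(1 - 3x + sqrt(1 + 2x + 9x² + 4x³))`, i.e. `F(u(x)) = x`.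

Here `t` is the formal square root (constant term `1`) of the quartic, so `u` is
characterized by `2x²·u = 1 + 3x - t`; and `σ` is the formal square root (constant term `1`)
of `1 + 2u + 9u² + 4u³`, so that `F(u(x)) = 2u/(1 - 3u + σ)`.  The conclusion
`2u·(1 - 3u + σ)⁻¹ = x` says precisely that this composition is `x`. -/
theorem reversion_of_elliptic_series (t u σ : PowerSeries ℚ)
    (ht : t ^ 2 = 1 + 6 * X + 9 * X ^ 2 - 4 * X ^ 3 - 8 * X ^ 4)
    (ht0 : constantCoeff t = 1)
    (hu : 2 * X ^ 2 * u = 1 + 3 * X - t)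
    (hσ : σ ^ 2 = 1 + 2 * u + 9 * u ^ 2 + 4 * u ^ 3)
    (hσ0 : constantCoeff σ = 1) :
    2 * u * (1 - 3 * u + σ)⁻¹ = X := by
  -- key polynomial relation for u
  have hX2P : (4 : PowerSeries ℚ) * ((X : PowerSeries ℚ) ^ 2 *
      (u + 3 * X * u - X ^ 2 * u ^ 2 - X - 2 * X ^ 2)) = 0 := by
    linear_combination (-1 : PowerSeries ℚ) * ht + (t + 1 + 3 * X - 2 * X ^ 2 * u) * hu
  have h4 : (4 : PowerSeries ℚ) ≠ 0 := by
    intro h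
    have := congrArg (constantCoeff) h
    rw [map_ofNat] at this; norm_num at this
  have hP : u + 3 * X * u - X ^ 2 * u ^ 2 - X - 2 * X ^ 2 = 0 := by
    rcases mul_eq_zero.mp hX2P with h | h
    · exact absurd h h4
    rcases mul_eq_zero.mp h with h | h
    · exact absurd h (pow_ne_zero _ X_ne_zero)
    · exact h
  -- constant coefficient of u is 0
  have hu0 : constantCoeff u = 0 := by
    have h0 := congrArg (constantCoeff) hP
    simpa using h0
  -- coefficient 1 of u is 1
  have hu1 : (coeff 1) u = 1 := by
    have h1 := congrArg (coeff 1) hP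
    simp [coeff_one, coeff_mul, coeff_X_pow, map_ofNat, Finset.sum_range_succ,
      Finset.Nat.sum_antidiagonal_eq_sum_range_succ_mk, hu0] at h1
    linarith
  -- the squared identity
  have hA2 : (2 * u + 3 * X * u - X - X * σ) * (2 * u + 3 * X * u - X + X * σ) = 0 := by
    linear_combination 4 * u * hP - X ^ 2 * hσ
  have hne : 2 * u + 3 * X * u - X + X * σ ≠ 0 := by
    intro h
    have h1 := congrArg (coeff 1) h
    simp [coeff_one, coeff_mul, coeff_X_pow, map_ofNat, Finset.sum_range_succ,
      Finset.Nat.sum_antidiagonal_eq_sum_range_succ_mk, hu0, hu1, hσ0] at h1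
  have hA : 2 * u + 3 * X * u - X - X * σ = 0 := by
    rcases mul_eq_zero.mp hA2 with h | h
    · exact h
    · exact absurd h hne
  -- denominator is a unit
  have hden : constantCoeff (1 - 3 * u + σ) ≠ 0 := by
    simp [hu0, hσ0]
  have hmul : (1 - 3 * u + σ) * (1 - 3 * u + σ)⁻¹ = 1 :=
    PowerSeries.mul_inv_cancel _ hden
  have key : 2 * u = X * (1 - 3 * u + σ) := by linear_combination hA
  calc 2 * u * (1 - 3 * u + σ)⁻¹ = X * ((1 - 3 * u + σ) * (1 - 3 * u + σ)⁻¹) := by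
        rw [key]; ring
    _ = X := by rw [hmul, mul_one]
end

section
/- The power series g(x) = (1 + 3x - sqrt(1 + 6x + 9x^2 - 4x^3 - 8x^4))/(2x^3) satisfies g(x) = ((1+2x)/(1+3x))·C(x^3(1+2x)/(1+3x)^2), where C is the Catalan generating function. -/
open PowerSeries

/-- The power series `g(x) = (1 + 3x - sqrt(1 + 6x + 9x² - 4x³ - 8x⁴))/(2x³)` satisfies
`g(x) = ((1+2x)/(1+3x)) · C(x³(1+2x)/(1+3x)²)`, where `C` is the Catalan generating function.

Here `t` is the formal square root (constant term `1`) of the quartic, so `g` is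
characterized by `2x³·g = 1 + 3x - t`.  With `A = x³(1+2x)/(1+3x)²`, the series
`w = C(A)` is characterized by `2A·w = 1 - sA` where `sA` is the formal square root
(constant term `1`) of `1 - 4A`. -/
theorem g_eq_catalan_form (t g sA w : PowerSeries ℚ)
    (ht : t ^ 2 = 1 + 6 * X + 9 * X ^ 2 - 4 * X ^ 3 - 8 * X ^ 4)
    (ht0 : constantCoeff t = 1)
    (hg : 2 * X ^ 3 * g = 1 + 3 * X - t)
    (hsA : sA ^ 2 = 1 - 4 * (X ^ 3 * (1 + 2 * X) * ((1 + 3 * X) ^ 2)⁻¹))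
    (hsA0 : constantCoeff sA = 1)
    (hw : 2 * (X ^ 3 * (1 + 2 * X) * ((1 + 3 * X) ^ 2)⁻¹) * w = 1 - sA) :
    g = (1 + 2 * X) * (1 + 3 * X)⁻¹ * w := by
  have hu : constantCoeff (1 + 3 * X : PowerSeries ℚ) ≠ 0 := by simp
  have hu2 : constantCoeff ((1 + 3 * X : PowerSeries ℚ) ^ 2) ≠ 0 := by
    rw [map_pow]; simp
  have hinv : (1 + 3 * X : PowerSeries ℚ) * (1 + 3 * X)⁻¹ = 1 :=
    PowerSeries.mul_inv_cancel _ hu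
  have hinv2 : ((1 + 3 * X : PowerSeries ℚ) ^ 2)⁻¹ * (1 + 3 * X) ^ 2 = 1 := by
    rw [mul_comm]; exact PowerSeries.mul_inv_cancel _ hu2
  -- sA * (1+3X) = t
  have hsq : (sA * (1 + 3 * X)) ^ 2 = t ^ 2 := by
    have : (sA * (1 + 3 * X)) ^ 2
        = sA ^ 2 * (1 + 3 * X) ^ 2 := by ring
    rw [this, hsA, ht, sub_mul, one_mul]
    have h4 : (4 : PowerSeries ℚ) * (X ^ 3 * (1 + 2 * X) * ((1 + 3 * X) ^ 2)⁻¹) * (1 + 3 * X) ^ 2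
        = 4 * (X ^ 3 * (1 + 2 * X)) * (((1 + 3 * X) ^ 2)⁻¹ * (1 + 3 * X) ^ 2) := by
      ring
    rw [h4, hinv2]
    ring
  have hsAt : sA * (1 + 3 * X) = t := by
    have hfac : (sA * (1 + 3 * X) - t) * (sA * (1 + 3 * X) + t) = 0 := by
      have := sub_eq_zero.mpr hsq
      calc (sA * (1 + 3 * X) - t) * (sA * (1 + 3 * X) + t)
          = (sA * (1 + 3 * X)) ^ 2 - t ^ 2 := by ring
        _ = 0 := this
    rcases mul_eq_zero.mp hfac with h | h
    · exact sub_eq_zero.mp h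
    · exfalso
      have := congrArg (constantCoeff) h
      simp [ht0, hsA0] at this
  -- multiply hw by (1+3X)^2
  have key : 2 * X ^ 3 * ((1 + 2 * X) * w) = 2 * X ^ 3 * ((1 + 3 * X) * g) := by
    have h1 := congrArg (· * (1 + 3 * X) ^ 2) hw
    have hL : 2 * (X ^ 3 * (1 + 2 * X) * ((1 + 3 * X) ^ 2)⁻¹) * w * (1 + 3 * X) ^ 2
        = 2 * X ^ 3 * ((1 + 2 * X) * w) * (((1 + 3 * X) ^ 2)⁻¹ * (1 + 3 * X) ^ 2) := by
      ring
    rw [hL, hinv2, mul_one] at h1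
    rw [h1]
    have : (1 - sA) * (1 + 3 * X) ^ 2 = (1 + 3 * X - sA * (1 + 3 * X)) * (1 + 3 * X) := by
      ring
    rw [this, hsAt, ← hg]
    ring
  have hX : (2 * X ^ 3 : PowerSeries ℚ) ≠ 0 :=
    mul_ne_zero (fun h => by
      have := congrArg (constantCoeff) h; rw [map_ofNat] at this; norm_num at this)
      (pow_ne_zero 3 PowerSeries.X_ne_zero)
  have key2 : (1 + 2 * X) * w = (1 + 3 * X) * g := mul_left_cancel₀ hX key
  calc g = ((1 + 3 * X) * (1 + 3 * X)⁻¹) * g := by rw [hinv, one_mul]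
    _ = (1 + 3 * X)⁻¹ * ((1 + 3 * X) * g) := by ring
    _ = (1 + 3 * X)⁻¹ * ((1 + 2 * X) * w) := by rw [key2]
    _ = (1 + 2 * X) * (1 + 3 * X)⁻¹ * w := by ring
end

section
/- If a sequence b is a binomial transform of a sequence a, i.e., b_n = Σ_{k=0}^n binom(n,k) a_k, then for every n the Hankel determinants agree: det(b_{i+j})_{0≤i,j≤n} = det(a_{i+j})_{0≤i,j≤n}. -/
open Finset Matrix

private lemma key_entry (a : ℕ → ℤ) (n i j : ℕ) (hi : i ≤ n) (hj : j ≤ n) :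
    ∑ k ∈ Finset.range (n + 1), ∑ l ∈ Finset.range (n + 1),
      (i.choose k : ℤ) * a (k + l) * (j.choose l)
    = ∑ m ∈ Finset.range (i + j + 1), ((i + j).choose m : ℤ) * a m := by
  set f : ℕ × ℕ → ℤ := fun p => (i.choose p.1 : ℤ) * a (p.1 + p.2) * (j.choose p.2) with hf
  have hT : ∀ p : ℕ × ℕ, p ∉ Finset.range (i + 1) ×ˢ Finset.range (j + 1) → f p = 0 := by
    intro p hp
    rw [Finset.mem_product, Finset.mem_range, Finset.mem_range] at hp
    rcases not_and_or.mp hp with h | h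
    · have : i.choose p.1 = 0 := Nat.choose_eq_zero_of_lt (by omega)
      simp [hf, this]
    · have : j.choose p.2 = 0 := Nat.choose_eq_zero_of_lt (by omega)
      simp [hf, this]
  have hL : ∑ k ∈ Finset.range (n + 1), ∑ l ∈ Finset.range (n + 1),
      (i.choose k : ℤ) * a (k + l) * (j.choose l)
      = ∑ p ∈ Finset.range (i + 1) ×ˢ Finset.range (j + 1), f p := by
    rw [← Finset.sum_product']
    refine (Finset.sum_subset ?_ ?_).symm
    · exact Finset.product_subset_product (Finset.range_subset_range.mpr (by omega))
        (Finset.range_subset_range.mpr (by omega))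
    · intro p _ hp; exact hT p hp
  have hR : ∑ m ∈ Finset.range (i + j + 1), ((i + j).choose m : ℤ) * a m
      = ∑ p ∈ Finset.range (i + 1) ×ˢ Finset.range (j + 1), f p := by
    have h1 : ∀ m ∈ Finset.range (i + j + 1), ((i + j).choose m : ℤ) * a m
        = ∑ p ∈ Finset.HasAntidiagonal.antidiagonal m, f p := by
      intro m _
      rw [Nat.add_choose_eq]
      push_cast
      rw [Finset.sum_mul]
      refine Finset.sum_congr rfl fun p hp => ?_
      rw [Finset.HasAntidiagonal.mem_antidiagonal] at hp
      simp [hf, hp]; ring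
    rw [Finset.sum_congr rfl h1, ← Finset.sum_sigma (σ := fun _ => ℕ × ℕ) _ _ (fun x => f x.2)]
    set g : ℕ × ℕ → (_ : ℕ) × (ℕ × ℕ) := fun p => ⟨p.1 + p.2, p⟩ with hg
    have hsub : (Finset.range (i + 1) ×ˢ Finset.range (j + 1)).image g ⊆
        (Finset.range (i + j + 1)).sigma (fun m => Finset.HasAntidiagonal.antidiagonal m) := by
      intro x hx
      rw [Finset.mem_image] at hx
      obtain ⟨p, hp, rfl⟩ := hx
      rw [Finset.mem_product, Finset.mem_range, Finset.mem_range] at hp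
      simp only [hg, Finset.mem_sigma, Finset.mem_range, Finset.HasAntidiagonal.mem_antidiagonal]
      exact ⟨by omega, trivial⟩
    have hzero : ∀ x ∈ (Finset.range (i + j + 1)).sigma (fun m => Finset.HasAntidiagonal.antidiagonal m),
        x ∉ (Finset.range (i + 1) ×ˢ Finset.range (j + 1)).image g → f x.2 = 0 := by
      intro x hx hnx
      rw [Finset.mem_sigma, Finset.mem_range, Finset.HasAntidiagonal.mem_antidiagonal] at hx
      refine hT x.2 fun hmem => hnx ?_
      rw [Finset.mem_image]
      exact ⟨x.2, hmem, by rw [hg]; simp only; rw [hx.2]⟩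
    have hinj : ∀ p ∈ Finset.range (i + 1) ×ˢ Finset.range (j + 1),
        ∀ q ∈ Finset.range (i + 1) ×ˢ Finset.range (j + 1), g p = g q → p = q := by
      intro p _ q _ h
      exact congrArg Sigma.snd h
    rw [← Finset.sum_subset hsub hzero, Finset.sum_image hinj]
  rw [hL, hR]

/-- If `b` is the binomial transform of `a`, i.e. `b n = Σ_{k=0}^n (n choose k) a k`, then all
Hankel determinants agree: `det (b (i+j)) = det (a (i+j))` for the `(n+1)×(n+1)` Hankel
matrices, for every `n`. -/
theorem hankel_det_binomial_transform (a b : ℕ → ℤ)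
    (hb : ∀ n : ℕ, b n = ∑ k ∈ Finset.range (n + 1), (n.choose k : ℤ) * a k) :
    ∀ n : ℕ,
      Matrix.det (Matrix.of fun i j : Fin (n + 1) => b (i.val + j.val)) =
        Matrix.det (Matrix.of fun i j : Fin (n + 1) => a (i.val + j.val)) := by
  intro n
  set P : Matrix (Fin (n + 1)) (Fin (n + 1)) ℤ :=
    Matrix.of fun i k => ((i : ℕ).choose (k : ℕ) : ℤ) with hP
  have hPdet : P.det = 1 := by
    have ht : P.BlockTriangular OrderDual.toDual := by
      intro i j hij
      have : (i : ℕ) < (j : ℕ) := hij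
      simp [hP, Nat.choose_eq_zero_of_lt this]
    rw [Matrix.det_of_lowerTriangular P ht]
    simp [hP]
  have hmat : (Matrix.of fun i j : Fin (n + 1) => b (i.val + j.val))
      = P * (Matrix.of fun i j : Fin (n + 1) => a (i.val + j.val)) * Pᵀ := by
    ext i j
    simp only [Matrix.mul_apply, Matrix.transpose_apply, Matrix.of_apply, hP]
    rw [hb]
    rw [← key_entry a n i j (Nat.lt_succ_iff.mp i.isLt) (Nat.lt_succ_iff.mp j.isLt)]
    rw [Finset.sum_comm]
    rw [← Fin.sum_univ_eq_sum_range
      (fun l => ∑ k ∈ Finset.range (n + 1), ((i : ℕ).choose k : ℤ) * a (k + l)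
        * ((j : ℕ).choose l))]
    refine Finset.sum_congr rfl fun l _ => ?_
    rw [Finset.sum_mul, ← Fin.sum_univ_eq_sum_range
      (fun k => ((i : ℕ).choose k : ℤ) * a (k + (l : ℕ)) * ((j : ℕ).choose (l : ℕ)))]
  rw [hmat, Matrix.det_mul, Matrix.det_mul, Matrix.det_transpose, hPdet]
  ring
end

section
/- The unique formal power series u with u(0) = 0 satisfying u/x = 1 - 4u + 2ux + u^2·x equals x·g_1(x), where g_1(x) = (1/(1 + 4x - 2x^2))·C(x^3/(1 + 4x - 2x^2)^2). -/
open PowerSeries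

/-- The unique formal power series `u` with `u(0) = 0` satisfying
`u/x = 1 - 4u + 2ux + u²x` equals `x·g₁(x)`, where
`g₁(x) = (1/(1+4x-2x²))·C(x³/(1+4x-2x²)²)`.

Here `w = C(A)` with `A = x³/(1+4x-2x²)²` is characterized by `2A·w = 1 - sA`, where
`sA` is the formal square root of `1 - 4A` with constant term `1`, and
`g₁ = (1+4x-2x²)⁻¹ · w`. -/
theorem u_eq_x_mul_g1 (u sA w g1 : PowerSeries ℚ)
    (hu0 : constantCoeff u = 0)
    (hu : u = X * (1 - 4 * u + 2 * u * X + u ^ 2 * X))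
    (hsA : sA ^ 2 = 1 - 4 * (X ^ 3 * ((1 + 4 * X - 2 * X ^ 2) ^ 2)⁻¹))
    (hsA0 : constantCoeff sA = 1)
    (hw : 2 * (X ^ 3 * ((1 + 4 * X - 2 * X ^ 2) ^ 2)⁻¹) * w = 1 - sA)
    (hg1 : g1 = (1 + 4 * X - 2 * X ^ 2)⁻¹ * w) :
    u = X * g1 := by
  set q : PowerSeries ℚ := 1 + 4 * X - 2 * X ^ 2 with hqdef
  have hq0 : constantCoeff q = 1 := by
    simp [hqdef, constantCoeff_X]
  have hq : q * q⁻¹ = 1 := PowerSeries.mul_inv_cancel _ (by rw [hq0]; norm_num)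
  have hq20 : constantCoeff (q ^ 2) = 1 := by rw [map_pow, hq0]; norm_num
  have hq2 : q ^ 2 * (q ^ 2)⁻¹ = 1 := PowerSeries.mul_inv_cancel _ (by rw [hq20]; norm_num)
  set A : PowerSeries ℚ := X ^ 3 * (q ^ 2)⁻¹ with hAdef
  have hAne : A ≠ 0 := by
    intro h
    have h3 : q ^ 2 * A = X ^ 3 := by
      rw [hAdef, mul_comm (X ^ 3) _, ← mul_assoc, hq2, one_mul]
    rw [h, mul_zero] at h3
    exact pow_ne_zero 3 PowerSeries.X_ne_zero h3.symm
  -- Catalan equation: A * w^2 = w - 1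
  have hcat : A * w ^ 2 = w - 1 := by
    have h1 : (2 * A * w) ^ 2 = (1 - sA) ^ 2 := by rw [hw]
    have h2 : (4 * A) * (A * w ^ 2 - w + 1) = 0 := by
      linear_combination h1 + hsA - 2 * hw
    rcases mul_eq_zero.mp h2 with h' | h'
    · exfalso
      rcases mul_eq_zero.mp h' with h4 | h4
      · have := congrArg constantCoeff h4
        rw [map_ofNat, map_zero] at this
        norm_num at this
      · exact hAne h4
    · linear_combination h'
  -- u satisfies the quadratic
  have hu' : u * q = X + X ^ 2 * u ^ 2 := by
    rw [hqdef]; linear_combination hu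
  -- inverse square identity
  have hinv2 : q⁻¹ ^ 2 = (q ^ 2)⁻¹ := by
    have hq2ne : (q : PowerSeries ℚ) ^ 2 ≠ 0 := by
      intro h
      rw [h] at hq20; simp at hq20
    have h5 : q ^ 2 * (q⁻¹ ^ 2 - (q ^ 2)⁻¹) = 0 := by
      linear_combination (q * q⁻¹ + 1) * hq - hq2
    rcases mul_eq_zero.mp h5 with h' | h'
    · exact absurd h' hq2ne
    · linear_combination h'
  -- X * g1 satisfies the quadratic
  have hv' : (X * g1) * q = X + X ^ 2 * (X * g1) ^ 2 := by
    rw [hg1]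
    linear_combination X * w * hq - X * hcat - X * w ^ 2 * hAdef -
      X ^ 4 * w ^ 2 * hinv2
  -- uniqueness
  have hd0 : constantCoeff (q - X ^ 2 * (u + X * g1)) = 1 := by
    simp [hq0, constantCoeff_X]
  have hdne : q - X ^ 2 * (u + X * g1) ≠ 0 := by
    intro h
    rw [h] at hd0; simp at hd0
  have hfin : (u - X * g1) * (q - X ^ 2 * (u + X * g1)) = 0 := by
    linear_combination hu' - hv'
  rcases mul_eq_zero.mp hfin with h' | h'
  · linear_combination h'
  · exact absurd h' hdne
end

section
/- Let α, β, γ, δ be elements of a field of characteristic 0. The unique formal power series u with u(0)=0 satisfying u/x = 1 + γx + αu + βux + δu^2·x is given by u = (1 - αx - βx^2 - sqrt(1 - 2αx + (α^2-2β)x^2 + 2(αβ-2δ)x^3 + (β^2-4γδ)x^4))/(2δx^2), provided δ ≠ 0. -/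
open PowerSeries

/-- Let `α, β, γ, δ` be elements of a field of characteristic `0` with `δ ≠ 0`.  The unique
formal power series `u` with `u(0) = 0` satisfying `u/x = 1 + γx + αu + βux + δu²x` is
`u = (1 - αx - βx² - sqrt(1 - 2αx + (α²-2β)x² + 2(αβ-2δ)x³ + (β²-4γδ)x⁴))/(2δx²)`,
where the square root `s` is the formal one with constant term `1`; i.e.
`2δx²·u = 1 - αx - βx² - s`. -/
theorem u_closed_form {K : Type*} [Field K] [CharZero K] (α β γ δ : K) (hδ : δ ≠ 0)
    (u s : PowerSeries K)
    (hu0 : constantCoeff u = 0)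
    (hu : u = X * (1 + C γ * X + C α * u + C β * u * X + C δ * u ^ 2 * X))
    (hs : s ^ 2 = 1 - 2 * C α * X + C (α ^ 2 - 2 * β) * X ^ 2
      + 2 * C (α * β - 2 * δ) * X ^ 3 + C (β ^ 2 - 4 * γ * δ) * X ^ 4)
    (hs0 : constantCoeff s = 1) :
    2 * C δ * X ^ 2 * u = 1 - C α * X - C β * X ^ 2 - s := by
  set T : PowerSeries K := 1 - C α * X - C β * X ^ 2 - 2 * C δ * X ^ 2 * u with hT
  have hT2 : T ^ 2 = s ^ 2 := by
    rw [hT, hs]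
    simp only [map_sub, map_mul, map_pow, map_ofNat, map_one]
    linear_combination (-(4 : PowerSeries K) * C δ * X ^ 2) * hu
  have hfac : (T - s) * (T + s) = 0 := by linear_combination hT2
  rcases mul_eq_zero.mp hfac with h | h
  · have h' := sub_eq_zero.mp h
    rw [hT] at h'
    linear_combination -h'
  · exfalso
    have h0 := congrArg (constantCoeff) h
    simp [hT, hu0, hs0] at h0
end
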